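/- Let A⁺, A⁻ : ℝ → ℝ be continuous. For i = 1, 2 let u_i⁺, u_i⁻, û_i ∈ ℝ satisfy the Rankine–Hugoniot condition A⁺(u_i⁺) = A⁻(u_i⁻) and the Kruzkov entropy inequality (with data (u_i⁻, u_i⁺, û_i)) at every c ∈ ℝ with c ∉ {u_i⁺, u_i⁻, û_i}. Then A⁺(u₁⁺)·[−2·χ(u₁⁺,u₂⁺) + 2·χ(u₁⁻,u₂⁻)] + A⁺(u₂⁺)·[−2·χ(u₂⁺,u₁⁺) + 2·χ(u₂⁻,u₁⁻)] ≤ 0. -/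
import Mathlib


open MeasureTheory Filter Set

/-- χ(v,u) = 1 if v < u, 1/2 if v = u, 0 if u < v. -/
noncomputable def chi (v u : ℝ) : ℝ := if v < u then 1 else if v = u then 1/2 else 0

/-- The Kruzkov entropy inequality at `c` for data `(um, up, uh)`:
`A⁺(u⁺)·sign(u⁺−c) − 2·sign(u⁺−û)·A⁺(c)·𝟙_{(û,u⁺)}(c) ≤
 A⁻(u⁻)·sign(u⁻−c) − 2·sign(u⁻−û)·A⁻(c)·𝟙_{(û,u⁻)}(c)`. -/
def KruzkovIneq (Ap Am : ℝ → ℝ) (um up uh c : ℝ) : Prop :=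
  Ap up * Real.sign (up - c) -
      2 * Real.sign (up - uh) * Ap c * Set.indicator (Set.uIoo uh up) (1 : ℝ → ℝ) c
    ≤ Am um * Real.sign (um - c) -
      2 * Real.sign (um - uh) * Am c * Set.indicator (Set.uIoo uh um) (1 : ℝ → ℝ) c

/-- A closed property holding on an open interval minus three points holds on the
closed interval (when the open interval is nonempty). -/
lemma closed_prop_of_dense (P : ℝ → Prop) (hP : IsClosed {c | P c}) {a b x y z t : ℝ}
    (h : ∀ c, a < c → c < b → c ≠ x → c ≠ y → c ≠ z → P c)
    (hab : a < b) (hat : a ≤ t) (htb : t ≤ b) : P t := by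
  by_contra hc
  have hopen : IsOpen {c | P c}ᶜ := hP.isOpen_compl
  rcases Metric.isOpen_iff.1 hopen t hc with ⟨δ, hδ, hball⟩
  have hlh : max a (t - δ) < min b (t + δ) := by
    simp only [lt_min_iff, max_lt_iff]
    refine ⟨⟨hab, by linarith⟩, by linarith, by linarith⟩
  have hinf : (Set.Ioo (max a (t - δ)) (min b (t + δ)) \ {x, y, z}).Infinite :=
    (Set.Ioo_infinite hlh).diff (by
      have : ({x, y, z} : Set ℝ).Finite := Set.toFinite _
      exact this)
  rcases hinf.nonempty with ⟨c, hcI, hcne⟩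
  have hax : a < c := lt_of_le_of_lt (le_max_left _ _) hcI.1
  have hcb : c < b := lt_of_lt_of_le hcI.2 (min_le_left _ _)
  have hcx : c ≠ x := fun hh => hcne (by simp [hh])
  have hcy : c ≠ y := fun hh => hcne (by simp [hh])
  have hcz : c ≠ z := fun hh => hcne (by simp [hh])
  have hPc : P c := h c hax hcb hcx hcy hcz
  have hcball : c ∈ Metric.ball t δ := by
    rw [Metric.mem_ball, Real.dist_eq, abs_sub_lt_iff]
    constructor
    · have := hcI.2; have := min_le_right b (t + δ); linarith [lt_of_lt_of_le hcI.2 (min_le_right b (t + δ))]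
    · have := lt_of_le_of_lt (le_max_right a (t - δ)) hcI.1; linarith
  exact (hball hcball) hPc

/-- F1: on (max(uh,um), up), Ap c ≥ Ap up. -/
lemma fact1 (Ap Am : ℝ → ℝ) (um up uh : ℝ)
    (hRH : Ap up = Am um)
    (hk : ∀ c : ℝ, c ≠ up → c ≠ um → c ≠ uh → KruzkovIneq Ap Am um up uh c)
    (c : ℝ) (h1 : uh < c) (h2 : um < c) (h3 : c < up) : Ap up ≤ Ap c := by
  have hkc := hk c (ne_of_lt h3) (ne_of_gt h2) (ne_of_gt h1)
  unfold KruzkovIneq at hkc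
  rw [Real.sign_of_pos (by linarith : (0:ℝ) < up - c),
      Real.sign_of_pos (by linarith : (0:ℝ) < up - uh),
      Real.sign_of_neg (by linarith : um - c < (0:ℝ)),
      Set.uIoo_of_lt (by linarith : uh < up),
      Set.indicator_of_mem (Set.mem_Ioo.2 ⟨h1, h3⟩),
      Set.indicator_of_notMem (by
        intro hmem
        rw [Set.uIoo, Set.mem_Ioo] at hmem
        exact absurd hmem.2 (not_lt.2 (sup_le h1.le h2.le)))] at hkc
  rw [hRH] at hkc ⊢
  simp only [Pi.one_apply] at hkc
  linarith

/-- F4a: on (up, min(uh,um)), Ap c ≤ Ap up. -/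
lemma fact2 (Ap Am : ℝ → ℝ) (um up uh : ℝ)
    (hRH : Ap up = Am um)
    (hk : ∀ c : ℝ, c ≠ up → c ≠ um → c ≠ uh → KruzkovIneq Ap Am um up uh c)
    (c : ℝ) (h1 : up < c) (h2 : c < uh) (h3 : c < um) : Ap c ≤ Ap up := by
  have hkc := hk c (ne_of_gt h1) (ne_of_lt h3) (ne_of_lt h2)
  unfold KruzkovIneq at hkc
  rw [Real.sign_of_neg (by linarith : up - c < (0:ℝ)),
      Real.sign_of_neg (by linarith : up - uh < (0:ℝ)),
      Real.sign_of_pos (by linarith : (0:ℝ) < um - c),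
      Set.uIoo_of_gt (by linarith : up < uh),
      Set.indicator_of_mem (Set.mem_Ioo.2 ⟨h1, h2⟩),
      Set.indicator_of_notMem (by
        intro hmem
        rw [Set.uIoo, Set.mem_Ioo] at hmem
        exact absurd hmem.1 (not_lt.2 (le_inf h2.le h3.le)))] at hkc
  rw [hRH] at hkc ⊢
  simp only [Pi.one_apply] at hkc
  linarith

/-- F5: on (max(uh,up), um), Am c ≤ Am um. -/
lemma fact3 (Ap Am : ℝ → ℝ) (um up uh : ℝ)
    (hRH : Ap up = Am um)
    (hk : ∀ c : ℝ, c ≠ up → c ≠ um → c ≠ uh → KruzkovIneq Ap Am um up uh c)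
    (c : ℝ) (h1 : uh < c) (h2 : up < c) (h3 : c < um) : Am c ≤ Am um := by
  have hkc := hk c (ne_of_gt h2) (ne_of_lt h3) (ne_of_gt h1)
  unfold KruzkovIneq at hkc
  rw [Real.sign_of_neg (by linarith : up - c < (0:ℝ)),
      Real.sign_of_pos (by linarith : (0:ℝ) < um - c),
      Real.sign_of_pos (by linarith : (0:ℝ) < um - uh),
      Set.uIoo_of_lt (by linarith : uh < um),
      Set.indicator_of_mem (Set.mem_Ioo.2 ⟨h1, h3⟩),
      Set.indicator_of_notMem (by
        intro hmem
        rw [Set.uIoo, Set.mem_Ioo] at hmem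
        exact absurd hmem.2 (not_lt.2 (sup_le h1.le h2.le)))] at hkc
  rw [hRH] at hkc
  simp only [Pi.one_apply] at hkc
  linarith

/-- F6: on (um, min(uh,up)), Am c ≥ Am um. -/
lemma fact4 (Ap Am : ℝ → ℝ) (um up uh : ℝ)
    (hRH : Ap up = Am um)
    (hk : ∀ c : ℝ, c ≠ up → c ≠ um → c ≠ uh → KruzkovIneq Ap Am um up uh c)
    (c : ℝ) (h1 : um < c) (h2 : c < uh) (h3 : c < up) : Am um ≤ Am c := by
  have hkc := hk c (ne_of_lt h3) (ne_of_gt h1) (ne_of_lt h2)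
  unfold KruzkovIneq at hkc
  rw [Real.sign_of_pos (by linarith : (0:ℝ) < up - c),
      Real.sign_of_neg (by linarith : um - c < (0:ℝ)),
      Real.sign_of_neg (by linarith : um - uh < (0:ℝ)),
      Set.uIoo_of_gt (by linarith : um < uh),
      Set.indicator_of_mem (Set.mem_Ioo.2 ⟨h1, h2⟩),
      Set.indicator_of_notMem (by
        intro hmem
        rw [Set.uIoo, Set.mem_Ioo] at hmem
        exact absurd hmem.1 (not_lt.2 (le_inf h2.le h3.le)))] at hkc
  rw [hRH] at hkc
  simp only [Pi.one_apply] at hkc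
  linarith

lemma gfact1 (Ap Am : ℝ → ℝ) (hAp : Continuous Ap) (hAm : Continuous Am) (um up uh : ℝ)
    (hRH : Ap up = Am um)
    (hk : ∀ c : ℝ, c ≠ up → c ≠ um → c ≠ uh → KruzkovIneq Ap Am um up uh c)
    (t : ℝ) (ht1 : uh ≤ t) (ht2 : um ≤ t) (ht3 : t ≤ up) : Ap up ≤ Ap t := by
  rcases eq_or_lt_of_le ht3 with rfl | htlt
  · exact le_refl _
  · refine closed_prop_of_dense (fun c => Ap up ≤ Ap c) (isClosed_le continuous_const hAp)
      (a := max uh um) (b := up) (x := up) (y := um) (z := uh)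
      (fun c hc1 hc2 _ _ _ => fact1 Ap Am um up uh hRH hk c
        (lt_of_le_of_lt (le_max_left _ _) hc1) (lt_of_le_of_lt (le_max_right _ _) hc1) hc2)
      (lt_of_le_of_lt (max_le ht1 ht2) htlt) (max_le ht1 ht2) htlt.le

lemma gfact2 (Ap Am : ℝ → ℝ) (hAp : Continuous Ap) (hAm : Continuous Am) (um up uh : ℝ)
    (hRH : Ap up = Am um)
    (hk : ∀ c : ℝ, c ≠ up → c ≠ um → c ≠ uh → KruzkovIneq Ap Am um up uh c)
    (t : ℝ) (ht1 : up ≤ t) (ht2 : t ≤ uh) (ht3 : t ≤ um) : Ap t ≤ Ap up := by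
  rcases eq_or_lt_of_le ht1 with rfl | htlt
  · exact le_refl _
  · refine closed_prop_of_dense (fun c => Ap c ≤ Ap up) (isClosed_le hAp continuous_const)
      (a := up) (b := min uh um) (x := up) (y := um) (z := uh)
      (fun c hc1 hc2 _ _ _ => fact2 Ap Am um up uh hRH hk c hc1
        (lt_of_lt_of_le hc2 (min_le_left _ _)) (lt_of_lt_of_le hc2 (min_le_right _ _)))
      (lt_of_lt_of_le htlt (le_min ht2 ht3)) htlt.le (le_min ht2 ht3)

lemma gfact3 (Ap Am : ℝ → ℝ) (hAp : Continuous Ap) (hAm : Continuous Am) (um up uh : ℝ)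
    (hRH : Ap up = Am um)
    (hk : ∀ c : ℝ, c ≠ up → c ≠ um → c ≠ uh → KruzkovIneq Ap Am um up uh c)
    (t : ℝ) (ht1 : uh ≤ t) (ht2 : up ≤ t) (ht3 : t ≤ um) : Am t ≤ Am um := by
  rcases eq_or_lt_of_le ht3 with rfl | htlt
  · exact le_refl _
  · refine closed_prop_of_dense (fun c => Am c ≤ Am um) (isClosed_le hAm continuous_const)
      (a := max uh up) (b := um) (x := up) (y := um) (z := uh)
      (fun c hc1 hc2 _ _ _ => fact3 Ap Am um up uh hRH hk c
        (lt_of_le_of_lt (le_max_left _ _) hc1) (lt_of_le_of_lt (le_max_right _ _) hc1) hc2)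
      (lt_of_le_of_lt (max_le ht1 ht2) htlt) (max_le ht1 ht2) htlt.le

lemma gfact4 (Ap Am : ℝ → ℝ) (hAp : Continuous Ap) (hAm : Continuous Am) (um up uh : ℝ)
    (hRH : Ap up = Am um)
    (hk : ∀ c : ℝ, c ≠ up → c ≠ um → c ≠ uh → KruzkovIneq Ap Am um up uh c)
    (t : ℝ) (ht1 : um ≤ t) (ht2 : t ≤ uh) (ht3 : t ≤ up) : Am um ≤ Am t := by
  rcases eq_or_lt_of_le ht1 with rfl | htlt
  · exact le_refl _
  · refine closed_prop_of_dense (fun c => Am um ≤ Am c) (isClosed_le continuous_const hAm)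
      (a := um) (b := min uh up) (x := up) (y := um) (z := uh)
      (fun c hc1 hc2 _ _ _ => fact4 Ap Am um up uh hRH hk c hc1
        (lt_of_lt_of_le hc2 (min_le_left _ _)) (lt_of_lt_of_le hc2 (min_le_right _ _)))
      (lt_of_lt_of_le htlt (le_min ht2 ht3)) htlt.le (le_min ht2 ht3)

/-- Key dissipativity lemma: crossing configuration forces flux ordering. -/
lemma key_lemma (Ap Am : ℝ → ℝ) (hAp : Continuous Ap) (hAm : Continuous Am)
    (up1 um1 uh1 up2 um2 uh2 : ℝ)
    (hRH1 : Ap up1 = Am um1) (hRH2 : Ap up2 = Am um2)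
    (hkruz1 : ∀ c : ℝ, c ≠ up1 → c ≠ um1 → c ≠ uh1 → KruzkovIneq Ap Am um1 up1 uh1 c)
    (hkruz2 : ∀ c : ℝ, c ≠ up2 → c ≠ um2 → c ≠ uh2 → KruzkovIneq Ap Am um2 up2 uh2 c)
    (hp : up1 < up2) (hm : um2 < um1) : Ap up2 ≤ Ap up1 := by
  -- abbreviations for the four closed-interval facts
  have G1 := gfact1 Ap Am hAp hAm um2 up2 uh2 hRH2 hkruz2   -- s2 ≤ Ap t on [max(uh2,um2), up2]
  have G2 := gfact2 Ap Am hAp hAm um1 up1 uh1 hRH1 hkruz1   -- Ap t ≤ s1 on [up1, min(uh1,um1)]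
  have G3 := gfact3 Ap Am hAp hAm um1 up1 uh1 hRH1 hkruz1   -- Am t ≤ s1 on [max(uh1,up1), um1]
  have G4 := gfact4 Ap Am hAp hAm um2 up2 uh2 hRH2 hkruz2   -- s2 ≤ Am t on [um2, min(uh2,up2)]
  rcases le_or_gt up1 uh1 with h1 | h1
  · rcases le_or_gt um1 uh1 with h2 | h2
    · rcases le_or_gt um1 up2 with h3 | h3
      · rcases le_or_gt um1 uh2 with h4 | h4
        · -- W4 via t = um1
          have := G4 um1 hm.le h4 h3
          rw [hRH1, hRH2]; exact this
        · rcases le_or_gt up1 um1 with h5 | h5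
          · -- R1 via t = um1
            exact le_trans (G1 um1 h4.le hm.le h3) (G2 um1 h5 h2 (le_refl _))
          · -- W1 via t = up1
            exact G1 up1 (by linarith) (by linarith) hp.le
      · -- W2 via t = up2
        exact G2 up2 hp.le (by linarith) (by linarith)
    · rcases le_or_gt uh1 up2 with h3 | h3
      · rcases le_or_gt uh1 um2 with h4 | h4
        · -- W3 via t = um2
          have := G3 um2 h4 (by linarith) hm.le
          rw [hRH1, hRH2]; exact this
        · rcases le_or_gt uh1 uh2 with h5 | h5
          · -- R2 via t = uh1
            have ha := G4 uh1 h4.le h5 h3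
            have hb := G3 uh1 (le_refl _) h1 h2.le
            rw [hRH1, hRH2]; exact le_trans ha hb
          · -- R1 via t = uh1
            exact le_trans (G1 uh1 h5.le h4.le h3) (G2 uh1 h1 (le_refl _) h2.le)
      · -- W2 via t = up2
        exact G2 up2 hp.le h3.le (by linarith)
  · rcases le_or_gt up1 um2 with h2 | h2
    · -- W3 via t = um2
      have := G3 um2 (by linarith) h2 hm.le
      rw [hRH1, hRH2]; exact this
    · rcases le_or_gt up1 uh2 with h3 | h3
      · rcases le_or_gt up1 um1 with h4 | h4
        · -- R2 via t = up1
          have ha := G4 up1 h2.le h3 hp.le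
          have hb := G3 up1 h1.le (le_refl _) h4
          rw [hRH1, hRH2]; exact le_trans ha hb
        · -- W4 via t = um1
          have := G4 um1 hm.le (by linarith) (by linarith)
          rw [hRH1, hRH2]; exact this
      · -- W1 via t = up1
        exact G1 up1 h3.le h2.le hp.le

theorem stmt_15 (Ap Am : ℝ → ℝ) (hAp : Continuous Ap) (hAm : Continuous Am)
    (up1 um1 uh1 up2 um2 uh2 : ℝ)
    (hRH1 : Ap up1 = Am um1) (hRH2 : Ap up2 = Am um2)
    (hkruz1 : ∀ c : ℝ, c ≠ up1 → c ≠ um1 → c ≠ uh1 → KruzkovIneq Ap Am um1 up1 uh1 c)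
    (hkruz2 : ∀ c : ℝ, c ≠ up2 → c ≠ um2 → c ≠ uh2 → KruzkovIneq Ap Am um2 up2 uh2 c) :
    Ap up1 * (-2 * chi up1 up2 + 2 * chi um1 um2) +
      Ap up2 * (-2 * chi up2 up1 + 2 * chi um2 um1) ≤ 0 := by
  rcases lt_trichotomy up1 up2 with hp | hp | hp
  · rcases lt_trichotomy um1 um2 with hm | hm | hm
    · simp only [chi, if_pos hp, if_pos hm, if_neg (lt_asymm hp), if_neg (ne_of_gt hp),
        if_neg (lt_asymm hm), if_neg (ne_of_gt hm)]
      ring_nf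
      linarith
    · have hs : Ap up1 = Ap up2 := by rw [hRH1, hRH2, hm]
      simp only [chi, if_pos hp, if_neg (lt_irrefl um1), if_pos hm,
        if_neg (lt_asymm hp), if_neg (ne_of_gt hp), hm, if_neg (lt_irrefl um2)]
      simp only [if_true]
      ring_nf
      linarith [hs]
    · have hkey := key_lemma Ap Am hAp hAm up1 um1 uh1 up2 um2 uh2 hRH1 hRH2 hkruz1 hkruz2 hp hm
      simp only [chi, if_pos hp, if_neg (lt_asymm hm), if_neg (ne_of_gt hm),
        if_neg (lt_asymm hp), if_neg (ne_of_gt hp), if_pos hm]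
      nlinarith
  · have hs : Ap up1 = Ap up2 := by rw [hp]
    rcases lt_trichotomy um1 um2 with hm | hm | hm
    · simp only [chi, if_neg (lt_irrefl up1), if_pos hp, hp, if_neg (lt_irrefl up2),
        if_pos hm, if_neg (lt_asymm hm), if_neg (ne_of_gt hm)]
      simp only [if_true]
      ring_nf
      linarith [hs]
    · simp only [chi, if_neg (lt_irrefl up1), if_pos hp, hp, if_neg (lt_irrefl up2),
        if_neg (lt_irrefl um1), if_pos hm, hm, if_neg (lt_irrefl um2)]
      simp only [if_true]
      ring_nf
      linarith [hs]
    · simp only [chi, if_neg (lt_irrefl up1), if_pos hp, hp, if_neg (lt_irrefl up2),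
        if_neg (lt_asymm hm), if_neg (ne_of_gt hm), if_pos hm]
      simp only [if_true]
      ring_nf
      linarith [hs]
  · rcases lt_trichotomy um1 um2 with hm | hm | hm
    · have hkey := key_lemma Ap Am hAp hAm up2 um2 uh2 up1 um1 uh1 hRH2 hRH1 hkruz2 hkruz1 hp hm
      simp only [chi, if_neg (lt_asymm hp), if_neg (ne_of_gt hp), if_pos hp,
        if_pos hm, if_neg (lt_asymm hm), if_neg (ne_of_gt hm)]
      nlinarith
    · have hs : Ap up1 = Ap up2 := by rw [hRH1, hRH2, hm]
      simp only [chi, if_neg (lt_asymm hp), if_neg (ne_of_gt hp), if_pos hp,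
        if_neg (lt_irrefl um1), if_pos hm, hm, if_neg (lt_irrefl um2)]
      simp only [if_true]
      ring_nf
      linarith [hs]
    · simp only [chi, if_neg (lt_asymm hp), if_neg (ne_of_gt hp), if_pos hp,
        if_neg (lt_asymm hm), if_neg (ne_of_gt hm), if_pos hm]
      ring_nf
      linarith
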